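/- arXiv:2405.20395 — 2 statements merged into one kernel-verified Lean document; each statement's English description precedes it below -/
import Mathlib

section
/- Let X be an uncountable set and G the group of countably supported bijections of X. The action of G on the set of injective sequences ℕ → X is transitive, and the stabilizer of any injective sequence x : ℕ → X is isomorphic to G itself. -/
/-- The group of bijections of `X` with countable support. -/
def countableSupport (X : Type*) : Subgroup (Equiv.Perm X) where
  carrier := {σ : Equiv.Perm X | {x : X | σ x ≠ x}.Countable}
  one_mem' := by
    have : {x : X | (1 : Equiv.Perm X) x ≠ x} = ∅ := by ext x; simp
    show {x : X | (1 : Equiv.Perm X) x ≠ x}.Countable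
    rw [this]; exact Set.countable_empty
  mul_mem' := by
    intro a b ha hb
    refine (ha.union hb).mono ?_
    intro x hx
    by_cases hbx : b x = x
    · exact Or.inl (by simpa [Equiv.Perm.mul_apply, hbx] using hx)
    · exact Or.inr hbx
  inv_mem' := by
    intro a ha
    refine ha.mono ?_
    intro x hx h
    exact hx (by nth_rewrite 1 [← h]; exact Equiv.symm_apply_apply a x)

/-- The stabilizer of a sequence `x : ℕ → X` in the group of countably supported
bijections of `X`. -/
def seqStabilizer {X : Type*} (x : ℕ → X) : Subgroup ↥(countableSupport X) where
  carrier := {g | ∀ n : ℕ, (g : Equiv.Perm X) (x n) = x n}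
  one_mem' := fun _ => rfl
  mul_mem' := by
    intro a b ha hb n
    show ((a : Equiv.Perm X) * (b : Equiv.Perm X)) (x n) = x n
    rw [Equiv.Perm.mul_apply, hb n, ha n]
  inv_mem' := by
    intro a ha n
    show ((a : Equiv.Perm X)⁻¹) (x n) = x n
    nth_rewrite 1 [← ha n]
    exact Equiv.symm_apply_apply (a : Equiv.Perm X) (x n)


open Equiv Function Set

section SwapPerm
variable {X : Type*}

open scoped Classical in
noncomputable def swapFun (x z : ℕ → X) (a : X) : X :=
  if h : ∃ n, x n = a then z h.choose
  else if h' : ∃ n, z n = a then x h'.choose else a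

theorem swapFun_x {x z : ℕ → X} (hx : Function.Injective x) (n : ℕ) :
    swapFun x z (x n) = z n := by
  have h : ∃ m, x m = x n := ⟨n, rfl⟩
  rw [swapFun, dif_pos h, hx h.choose_spec]

theorem swapFun_z {x z : ℕ → X} (hx : Function.Injective x) (hz : Function.Injective z)
    (hd : ∀ m n, x m ≠ z n) (n : ℕ) : swapFun x z (z n) = x n := by
  have h : ¬ ∃ m, x m = z n := by rintro ⟨m, hm⟩; exact hd m n hm
  have h' : ∃ m, z m = z n := ⟨n, rfl⟩
  rw [swapFun, dif_neg h, dif_pos h', hz h'.choose_spec]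

theorem swapFun_fix {x z : ℕ → X} {a : X} (h : ¬ ∃ n, x n = a) (h' : ¬ ∃ n, z n = a) :
    swapFun x z a = a := by
  rw [swapFun, dif_neg h, dif_neg h']

theorem swapFun_invol {x z : ℕ → X} (hx : Function.Injective x) (hz : Function.Injective z)
    (hd : ∀ m n, x m ≠ z n) : Function.Involutive (swapFun x z) := by
  intro a
  by_cases h : ∃ n, x n = a
  · obtain ⟨n, rfl⟩ := h
    rw [swapFun_x hx, swapFun_z hx hz hd]
  · by_cases h' : ∃ n, z n = a
    · obtain ⟨n, rfl⟩ := h'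
      rw [swapFun_z hx hz hd, swapFun_x hx]
    · rw [swapFun_fix h h', swapFun_fix h h']

noncomputable def swapPerm {x z : ℕ → X} (hx : Function.Injective x)
    (hz : Function.Injective z) (hd : ∀ m n, x m ≠ z n) : Equiv.Perm X :=
  (swapFun_invol hx hz hd).toPerm _

theorem swapPerm_mem {x z : ℕ → X} (hx : Function.Injective x)
    (hz : Function.Injective z) (hd : ∀ m n, x m ≠ z n) :
    swapPerm hx hz hd ∈ countableSupport X := by
  refine ((Set.countable_range x).union (Set.countable_range z)).mono ?_
  intro a ha
  rcases em (∃ n, x n = a) with h | h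
  · exact Or.inl (by obtain ⟨n, hn⟩ := h; exact ⟨n, hn⟩)
  · rcases em (∃ n, z n = a) with h' | h'
    · exact Or.inr (by obtain ⟨n, hn⟩ := h'; exact ⟨n, hn⟩)
    · exact absurd (swapFun_fix h h') ha

theorem swapPerm_apply_x {x z : ℕ → X} (hx : Function.Injective x)
    (hz : Function.Injective z) (hd : ∀ m n, x m ≠ z n) (n : ℕ) :
    swapPerm hx hz hd (x n) = z n := swapFun_x hx n

theorem swapPerm_apply_z {x z : ℕ → X} (hx : Function.Injective x)
    (hz : Function.Injective z) (hd : ∀ m n, x m ≠ z n) (n : ℕ) :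
    swapPerm hx hz hd (z n) = x n := swapFun_z hx hz hd n

end SwapPerm

section Compl
variable {X : Type*} [Uncountable X]

theorem compl_not_countable {s : Set X} (hs : s.Countable) : ¬ (sᶜ : Set X).Countable := by
  intro h
  have : (Set.univ : Set X).Countable := by
    rw [← Set.union_compl_self s]; exact hs.union h
  rw [Set.countable_univ_iff] at this
  exact (not_countable (α := X)) this

theorem compl_equiv {s : Set X} (hs : s.Countable) : Nonempty ((sᶜ : Set X) ≃ X) := by
  have h1 := compl_not_countable hs
  have hb : Cardinal.aleph0 ≤ Cardinal.mk (sᶜ : Set X) := by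
    by_contra hcon
    push_neg at hcon
    exact h1 (Cardinal.le_aleph0_iff_set_countable.mp hcon.le)
  have hle : Cardinal.mk s ≤ Cardinal.mk (sᶜ : Set X) :=
    le_trans (Cardinal.le_aleph0_iff_set_countable.mpr hs) hb
  have : Cardinal.mk (sᶜ : Set X) = Cardinal.mk X := by
    rw [← Cardinal.mk_sum_compl s, Cardinal.add_eq_right hb hle]
  exact Cardinal.eq.mp this

end Compl

section Congr
variable {α β : Type*}

noncomputable def countableSupportCongr (e : α ≃ β) :
    ↥(countableSupport α) ≃* ↥(countableSupport β) where
  toFun g := ⟨e.permCongr g.1, by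
    refine (g.2.image e).mono ?_
    intro b hb
    have hb' : e ((g : Perm α) (e.symm b)) ≠ b := hb
    refine ⟨e.symm b, ?_, by simp⟩
    intro hfix
    exact hb' (by rw [hfix]; simp)⟩
  invFun g := ⟨e.symm.permCongr g.1, by
    refine (g.2.image e.symm).mono ?_
    intro a ha
    have ha' : e.symm ((g : Perm β) (e a)) ≠ a := ha
    refine ⟨e a, ?_, by simp⟩
    intro hfix
    exact ha' (by rw [hfix]; simp)⟩
  left_inv g := by
    ext a
    simp [Equiv.permCongr_apply]
  right_inv g := by
    ext b
    simp [Equiv.permCongr_apply]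
  map_mul' g h := by
    ext b
    simp [Equiv.permCongr_apply, Equiv.Perm.mul_apply]

end Congr

section Stab
variable {X : Type*}

theorem stab_mem_iff {x : ℕ → X} (g : ↥(seqStabilizer x)) (a : X) :
    a ∈ ((Set.range x)ᶜ : Set X) ↔ (g : Equiv.Perm X) a ∈ ((Set.range x)ᶜ : Set X) := by
  constructor
  · intro ha hmem
    obtain ⟨n, hn⟩ := hmem
    have h2 : ((g : ↥(countableSupport X)) : Equiv.Perm X) (x n) = x n := g.2 n
    have : x n = a := ((g : ↥(countableSupport X)) : Equiv.Perm X).injective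
      (by rw [h2]; exact hn)
    exact ha ⟨n, this⟩
  · intro ha hmem
    obtain ⟨n, hn⟩ := hmem
    exact ha ⟨n, by rw [← hn]; exact (g.2 n).symm⟩

open scoped Classical in
noncomputable def stabEquivCompl (x : ℕ → X) :
    ↥(seqStabilizer x) ≃* ↥(countableSupport ((Set.range x)ᶜ : Set X)) where
  toFun g := ⟨Equiv.Perm.subtypePerm ((g : ↥(countableSupport X)) : Equiv.Perm X)
      (fun a => (stab_mem_iff g a).symm), by
    refine Set.Countable.mono ?_ (((g : ↥(countableSupport X)).2).preimage
      Subtype.val_injective)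
    intro s hs hfix
    exact hs (Subtype.ext hfix)⟩
  invFun h := ⟨⟨Equiv.Perm.ofSubtype h.1, by
      refine (h.2.image Subtype.val).mono ?_
      intro a ha
      by_cases hp : a ∈ ((Set.range x)ᶜ : Set X)
      · refine ⟨⟨a, hp⟩, ?_, rfl⟩
        intro hfix
        exact ha (by rw [Equiv.Perm.ofSubtype_apply_of_mem h.1 hp, hfix])
      · exact absurd (Equiv.Perm.ofSubtype_apply_of_not_mem h.1 hp) ha⟩, by
    intro n
    exact Equiv.Perm.ofSubtype_apply_of_not_mem h.1 (by simp)⟩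
  left_inv g := by
    refine Subtype.ext (Subtype.ext (Equiv.ext fun a => ?_))
    by_cases hp : a ∈ ((Set.range x)ᶜ : Set X)
    · rw [Equiv.Perm.ofSubtype_apply_of_mem _ hp]; rfl
    · rw [Equiv.Perm.ofSubtype_apply_of_not_mem _ hp]
      simp only [Set.mem_compl_iff, not_not] at hp
      obtain ⟨n, rfl⟩ := hp
      exact (g.2 n).symm
  right_inv h := by
    refine Subtype.ext (Equiv.ext fun s => ?_)
    refine Subtype.ext ?_
    show Equiv.Perm.ofSubtype h.1 s.1 = _
    rw [Equiv.Perm.ofSubtype_apply_of_mem h.1 s.2]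
  map_mul' g h := by
    refine Subtype.ext (Equiv.ext fun s => rfl)

end Stab

/-- The group `G` of countably supported bijections of an uncountable set `X` acts
transitively on injective sequences `ℕ → X`, and the stabilizer of any injective
sequence is isomorphic to `G` itself. -/
theorem stmt4 {X : Type*} [Uncountable X] (x y : ℕ → X)
    (hx : Function.Injective x) (hy : Function.Injective y) :
    (∃ g : ↥(countableSupport X), ∀ n : ℕ, (g : Equiv.Perm X) (x n) = y n) ∧
    Nonempty (↥(seqStabilizer x) ≃* ↥(countableSupport X)) := by

  constructor
  · have hC : (Set.range x ∪ Set.range y).Countable :=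
      (Set.countable_range x).union (Set.countable_range y)
    have hinf : ((Set.range x ∪ Set.range y)ᶜ : Set X).Infinite := by
      intro hfin
      exact compl_not_countable hC hfin.countable
    let e := hinf.natEmbedding
    have hz : Function.Injective (fun n => ((e n : ((Set.range x ∪ Set.range y)ᶜ : Set X)) : X)) :=
      Subtype.val_injective.comp e.injective
    have hzmem : ∀ n : ℕ, ((e n : ((Set.range x ∪ Set.range y)ᶜ : Set X)) : X) ∈
        ((Set.range x ∪ Set.range y)ᶜ : Set X) := fun n => (e n).2
    have hd1 : ∀ m n, x m ≠ ((e n : ((Set.range x ∪ Set.range y)ᶜ : Set X)) : X) := by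
      intro m n h
      exact hzmem n (Or.inl ⟨m, h⟩)
    have hd2 : ∀ m n, y m ≠ ((e n : ((Set.range x ∪ Set.range y)ᶜ : Set X)) : X) := by
      intro m n h
      exact hzmem n (Or.inr ⟨m, h⟩)
    refine ⟨⟨swapPerm hy hz hd2 * swapPerm hx hz hd1,
      (countableSupport X).mul_mem (swapPerm_mem hy hz hd2) (swapPerm_mem hx hz hd1)⟩, ?_⟩
    intro n
    show (swapPerm hy hz hd2) ((swapPerm hx hz hd1) (x n)) = y n
    rw [swapPerm_apply_x hx hz hd1 n, swapPerm_apply_z hy hz hd2 n]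
  · obtain ⟨e⟩ := compl_equiv (Set.countable_range x)
    exact ⟨(stabEquivCompl x).trans (countableSupportCongr e)⟩
end

section
/- Let G be the group of bijections of an uncountable set X with countable support. Then every homogeneous quasimorphism on G is identically zero. -/
private lemma aux_zero_of_small (x c : ℝ) (h : ∀ n : ℕ, |(n : ℝ) * x| ≤ c) : x = 0 := by
  by_contra hx
  have hx' : 0 < |x| := abs_pos.mpr hx
  obtain ⟨n, hn⟩ := exists_nat_gt (c / |x|)
  have h1 := h n
  rw [abs_mul, Nat.abs_cast] at h1
  have h2 : (n : ℝ) ≤ c / |x| := (le_div_iff₀ hx').mpr h1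
  linarith

private lemma aux_qm_conj {G : Type*} [Group G] (φ : G → ℝ) (C : ℝ)
    (hC : ∀ g h : G, |φ (g * h) - φ g - φ h| ≤ C)
    (hhom : ∀ g : G, ∀ n : ℤ, φ (g ^ n) = n * φ g)
    (u v : G) : φ (u⁻¹ * v * u) = φ v := by
  have einv : φ u⁻¹ = -φ u := by simpa using hhom u (-1)
  have key : ∀ n : ℕ, |(n : ℝ) * (φ (u⁻¹ * v * u) - φ v)| ≤ C + C := by
    intro n
    have h1 : (u⁻¹ * v * u) ^ (n : ℤ) = u⁻¹ * v ^ (n : ℤ) * u := by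
      simpa using conj_zpow (i := (n : ℤ)) (a := u⁻¹) (b := v)
    have e1 := hhom (u⁻¹ * v * u) n
    rw [h1] at e1
    have e2 := hhom v n
    push_cast at e1 e2
    have b1 := hC (u⁻¹ * v ^ (n : ℤ)) u
    have b2 := hC u⁻¹ (v ^ (n : ℤ))
    have eq : (n : ℝ) * (φ (u⁻¹ * v * u) - φ v)
        = (φ (u⁻¹ * v ^ (n : ℤ) * u) - φ (u⁻¹ * v ^ (n : ℤ)) - φ u)
          + (φ (u⁻¹ * v ^ (n : ℤ)) - φ u⁻¹ - φ (v ^ (n : ℤ))) := by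
      rw [e1, e2, einv]; ring
    rw [eq]
    calc |(φ (u⁻¹ * v ^ (n : ℤ) * u) - φ (u⁻¹ * v ^ (n : ℤ)) - φ u)
          + (φ (u⁻¹ * v ^ (n : ℤ)) - φ u⁻¹ - φ (v ^ (n : ℤ)))|
        ≤ |φ (u⁻¹ * v ^ (n : ℤ) * u) - φ (u⁻¹ * v ^ (n : ℤ)) - φ u|
          + |φ (u⁻¹ * v ^ (n : ℤ)) - φ u⁻¹ - φ (v ^ (n : ℤ))| := abs_add_le _ _
      _ ≤ C + C := add_le_add b1 b2
  have := aux_zero_of_small _ _ key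
  linarith

private lemma aux_qm_commute {G : Type*} [Group G] (φ : G → ℝ) (C : ℝ)
    (hC : ∀ g h : G, |φ (g * h) - φ g - φ h| ≤ C)
    (hhom : ∀ g : G, ∀ n : ℤ, φ (g ^ n) = n * φ g)
    (u v : G) (huv : u * v = v * u) : φ (u * v) = φ u + φ v := by
  have key : ∀ n : ℕ, |(n : ℝ) * (φ (u * v) - φ u - φ v)| ≤ C := by
    intro n
    have hcomm : Commute u v := huv
    have h1 : (u * v) ^ (n : ℤ) = u ^ (n : ℤ) * v ^ (n : ℤ) := hcomm.mul_zpow _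
    have e1 := hhom (u * v) n
    rw [h1] at e1
    have e2 := hhom u n
    have e3 := hhom v n
    have b1 := hC (u ^ (n : ℤ)) (v ^ (n : ℤ))
    push_cast at e1 e2 e3
    have eq : (n : ℝ) * (φ (u * v) - φ u - φ v)
        = φ (u ^ (n : ℤ) * v ^ (n : ℤ)) - φ (u ^ (n : ℤ)) - φ (v ^ (n : ℤ)) := by
      linarith
    rw [eq]; exact b1
  have := aux_zero_of_small _ _ key
  linarith


open Equiv in
private lemma aux_binate {X : Type*} [Uncountable X] (a : ↥(countableSupport X)) :
    ∃ b t : ↥(countableSupport X), t⁻¹ * b * t = a * b ∧ a * b = b * a := by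
  classical
  obtain ⟨g, hg⟩ := a
  set S : Set X := {x | g x ≠ x} with hSdef
  have hgc : S.Countable := hg
  haveI : Countable ↥S := hgc.to_subtype
  -- the complement is infinite
  have hScu : ¬(Sᶜ : Set X).Countable := by
    intro h
    have h2 : (Set.univ : Set X).Countable := by
      simpa [Set.union_compl_self] using hgc.union h
    exact Set.not_countable_univ h2
  haveI : Infinite ↥(Sᶜ : Set X) := Set.infinite_coe_iff.mpr
    (fun hfin => hScu hfin.countable)
  -- an injection of ℤ × S into the complement
  obtain ⟨f, hf⟩ := exists_injective_nat (ℤ × ↥S)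
  set j : ℤ × ↥S → ↥(Sᶜ : Set X) := fun p => Infinite.natEmbedding _ (f p) with hjdef
  have hj : Function.Injective j := (Infinite.natEmbedding _).injective.comp hf
  -- the embedding with level 0 equal to S itself
  set E : ℤ × ↥S → X := fun p => if p.1 = 0 then (p.2 : X) else (j p : X) with hEdef
  have hE0 : ∀ s : ↥S, E (0, s) = s := fun s => by simp [hEdef]
  have hEnot : ∀ p : ℤ × ↥S, p.1 ≠ 0 → E p ∉ S := by
    intro p hp
    simp only [hEdef, if_neg hp]
    exact (j p).2
  have hEinj : Function.Injective E := by
    rintro ⟨n, s⟩ ⟨m, r⟩ h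
    by_cases hn : n = 0 <;> by_cases hm : m = 0
    · subst hn; subst hm
      simp only [hEdef, if_pos rfl] at h
      exact congrArg _ (Subtype.ext h)
    · exfalso; apply hEnot (m, r) hm
      rw [← h]; simp only [hEdef, if_pos hn]; exact s.2
    · exfalso; apply hEnot (n, s) hn
      rw [h]; simp only [hEdef, if_pos hm]; exact r.2
    · simp only [hEdef, if_neg hn, if_neg hm] at h
      exact hj (Subtype.coe_injective h)
  -- S is invariant under g
  have hinv : ∀ x : X, x ∈ S ↔ g x ∈ S := by
    intro x
    constructor
    · exact fun h h2 => h (g.injective h2)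
    · intro h hx
      exact h (by rw [hx]; exact hx)
  set gS : Perm ↥S := g.subtypePerm (fun x => (hinv x).symm) with hgSdef
  -- the three permutations of ℤ × S
  set τ : Perm (ℤ × ↥S) := Equiv.prodCongr (Equiv.addRight (1 : ℤ)) (Equiv.refl ↥S) with hτ
  set ψ₀ : Perm (ℤ × ↥S) :=
    Equiv.prodShear (Equiv.refl ℤ) (fun n => if 1 ≤ n then gS else Equiv.refl ↥S) with hψ₀
  set σ₀ : Perm (ℤ × ↥S) :=
    Equiv.prodShear (Equiv.refl ℤ) (fun n => if n = 0 then gS else Equiv.refl ↥S) with hσ₀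
  have hkey : ψ₀ * τ = τ * (σ₀ * ψ₀) := by
    refine Equiv.ext fun ⟨n, s⟩ => ?_
    simp only [hτ, hψ₀, hσ₀, Equiv.Perm.mul_apply, Equiv.prodCongr_apply, Equiv.prodShear_apply,
      Equiv.coe_addRight, Equiv.refl_apply, Equiv.coe_refl, id_eq, Prod.map_apply]
    refine Prod.ext rfl ?_
    by_cases h0 : n = 0
    · subst h0; norm_num
    · by_cases h1 : 1 ≤ n
      · have h2 : (1 : ℤ) ≤ n + 1 := by omega
        simp [h0, h1, h2]
      · have h2 : ¬(1 : ℤ) ≤ n + 1 := by omega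
        simp [h0, h1, h2]
  have hconj0 : τ⁻¹ * ψ₀ * τ = σ₀ * ψ₀ := by
    rw [mul_assoc, hkey, ← mul_assoc, inv_mul_cancel, one_mul]
  have hcomm0 : σ₀ * ψ₀ = ψ₀ * σ₀ := by
    refine Equiv.ext fun ⟨n, s⟩ => ?_
    simp only [hψ₀, hσ₀, Equiv.Perm.mul_apply, Equiv.prodShear_apply, Equiv.refl_apply,
      Equiv.coe_refl, id_eq]
    refine Prod.ext rfl ?_
    by_cases h0 : n = 0
    · subst h0; norm_num
    · by_cases h1 : 1 ≤ n <;> simp [h0, h1]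
  set p : X → Prop := fun x => x ∈ Set.range E with hpdef
  set q : (ℤ × ↥S) ≃ Subtype p := Equiv.ofInjective E hEinj with hqdef
  have hσ : σ₀.extendDomain q = g := by
    refine Equiv.ext fun x => ?_
    by_cases hx : p x
    · obtain ⟨⟨n, s⟩, rfl⟩ := hx
      have hxq : E (n, s) = ((q (n, s) : Subtype p) : X) := rfl
      rw [hxq, Equiv.Perm.extendDomain_apply_image]
      by_cases h0 : n = 0
      · subst h0
        have h1 : σ₀ (0, s) = (0, gS s) := by simp [hσ₀]
        rw [h1]
        show E (0, gS s) = g (E (0, s))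
        rw [hE0, hE0]
        rfl
      · have h1 : σ₀ (n, s) = (n, s) := by simp [hσ₀, h0]
        rw [h1]
        show E (n, s) = g (E (n, s))
        exact (not_ne_iff.mp (hEnot (n, s) h0)).symm
    · rw [Equiv.Perm.extendDomain_apply_not_subtype _ _ hx]
      have hxS : x ∉ S := fun h => hx ⟨(0, ⟨x, h⟩), hE0 _⟩
      exact (not_ne_iff.mp hxS).symm
  have hmem : ∀ e : Equiv.Perm (ℤ × ↥S), e.extendDomain q ∈ countableSupport X := by
    intro e
    have hsub : {x : X | e.extendDomain q x ≠ x} ⊆ Set.range E := by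
      intro x hx
      by_contra hxr
      exact hx (Equiv.Perm.extendDomain_apply_not_subtype _ _ hxr)
    exact (Set.countable_range E).mono hsub
  refine ⟨⟨ψ₀.extendDomain q, hmem _⟩, ⟨τ.extendDomain q, hmem _⟩, ?_, ?_⟩
  · apply Subtype.ext
    show (τ.extendDomain q)⁻¹ * ψ₀.extendDomain q * τ.extendDomain q
        = g * ψ₀.extendDomain q
    rw [Equiv.Perm.extendDomain_inv, Equiv.Perm.extendDomain_mul,
      Equiv.Perm.extendDomain_mul, hconj0, ← Equiv.Perm.extendDomain_mul, hσ]
  · apply Subtype.ext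
    show g * ψ₀.extendDomain q = ψ₀.extendDomain q * g
    rw [← hσ, Equiv.Perm.extendDomain_mul, hcomm0, ← Equiv.Perm.extendDomain_mul]

/-- Every homogeneous quasimorphism on the group of countably supported bijections
of an uncountable set vanishes identically. -/
theorem stmt13 {X : Type*} [Uncountable X]
    (φ : ↥(countableSupport X) → ℝ)
    (hq : ∃ C : ℝ, ∀ g h : ↥(countableSupport X), |φ (g * h) - φ g - φ h| ≤ C)
    (hhom : ∀ g : ↥(countableSupport X), ∀ n : ℤ, φ (g ^ n) = n * φ g) :
    ∀ g : ↥(countableSupport X), φ g = 0 := by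
  intro a
  obtain ⟨C, hC⟩ := hq
  obtain ⟨b, t, hconj, hcomm⟩ := aux_binate a
  have h1 : φ (a * b) = φ a + φ b := aux_qm_commute φ C hC hhom a b hcomm
  have h2 : φ (t⁻¹ * b * t) = φ b := aux_qm_conj φ C hC hhom t b
  rw [hconj] at h2
  linarith
end
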